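/- Let w be a Coxeter element of the Weyl group of an irreducible root system of rank r, acting on the real vector space V spanned by the roots. Then 1 is not an eigenvalue of w on V; equivalently, the fixed subspace V^w is zero. -/

import Mathlib

section aux

variable {V : Type*} [NormedAddCommGroup V] [InnerProductSpace ℝ V] {r : ℕ}
  (α : Fin r → V) (s : Fin r → Module.End ℝ V)
  (hs : ∀ (i : Fin r) (x : V),
      s i x = x - (2 * (inner ℝ (α i) x : ℝ) / (inner ℝ (α i) (α i) : ℝ)) • α i)

include hs in
/-- The product of reflections over a list moves a vector only within the span of the
corresponding roots. -/
lemma aux_mem_span : ∀ (l : List (Fin r)) (x : V),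
    (l.map s).prod x - x ∈ Submodule.span ℝ (α '' {i | i ∈ l}) := by
  intro l
  induction l with
  | nil => simp
  | cons i t ih =>
      intro x
      have hy : ((i :: t).map s).prod x = s i ((t.map s).prod x) := by
        simp [List.prod_cons, Module.End.mul_apply]
      set y := (t.map s).prod x with hy'
      have h1 : y - x ∈ Submodule.span ℝ (α '' {j | j ∈ t}) := ih x
      have hsub : Submodule.span ℝ (α '' {j | j ∈ t}) ≤
          Submodule.span ℝ (α '' {j | j ∈ i :: t}) := by
        apply Submodule.span_mono
        apply Set.image_mono
        intro j hj
        simp only [Set.mem_setOf_eq, List.mem_cons] at *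
        exact Or.inr hj
      have h2 : s i y - y ∈ Submodule.span ℝ (α '' {j | j ∈ i :: t}) := by
        rw [hs i y]
        have heq : y - (2 * (inner ℝ (α i) y : ℝ) / (inner ℝ (α i) (α i) : ℝ)) • α i - y
            = (-(2 * (inner ℝ (α i) y : ℝ) / (inner ℝ (α i) (α i) : ℝ))) • α i := by
          rw [neg_smul]; abel
        rw [heq]
        exact Submodule.smul_mem _ _
          (Submodule.subset_span ⟨i, by simp, rfl⟩)
      have h3 : ((i :: t).map s).prod x - x = (s i y - y) + (y - x) := by
        rw [hy]; abel
      rw [h3]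
      exact Submodule.add_mem _ h2 (hsub h1)

include hs in
lemma aux_fix (hne : ∀ i, α i ≠ 0) (hli : LinearIndependent ℝ α) :
    ∀ (l : List (Fin r)), l.Nodup → ∀ (x : V), (l.map s).prod x = x →
      ∀ i ∈ l, (inner ℝ (α i) x : ℝ) = 0 := by
  intro l
  induction l with
  | nil => simp
  | cons i t ih =>
      intro hnd x hx
      have hndt : t.Nodup := hnd.of_cons
      have hit : i ∉ t := (List.nodup_cons.mp hnd).1
      set y := (t.map s).prod x with hy'
      have hy : s i y = x := by
        have h : ((i :: t).map s).prod x = s i ((t.map s).prod x) := by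
          simp [List.prod_cons, Module.End.mul_apply]
        rw [← hx, h]
      have h1 : y - x ∈ Submodule.span ℝ (α '' {j | j ∈ t}) := aux_mem_span α s hs t x
      set c : ℝ := 2 * (inner ℝ (α i) y : ℝ) / (inner ℝ (α i) (α i) : ℝ) with hc
      have h2 : y - x = c • α i := by
        have h := hs i y
        rw [hy] at h
        rw [h]; abel
      have hnotmem : α i ∉ Submodule.span ℝ (α '' {j | j ∈ t}) :=
        hli.notMem_span_image (by simpa using hit)
      have hc0 : c = 0 := by
        by_contra hcne
        apply hnotmem
        have h : α i = c⁻¹ • (c • α i) := by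
          rw [smul_smul, inv_mul_cancel₀ hcne, one_smul]
        rw [h, ← h2]
        exact Submodule.smul_mem _ _ h1
      have hyx : y = x := by
        have h : y - x = 0 := by rw [h2, hc0, zero_smul]
        exact sub_eq_zero.mp h
      have haa : (inner ℝ (α i) (α i) : ℝ) ≠ 0 := by
        rw [inner_self_ne_zero]; exact hne i
      have hix : (inner ℝ (α i) x : ℝ) = 0 := by
        rw [← hyx]
        have h : 2 * (inner ℝ (α i) y : ℝ) = 0 := by
          have := hc0
          rw [hc, div_eq_zero_iff] at this
          tauto
        linarith
      intro j hj
      rcases List.mem_cons.mp hj with h | h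
      · rw [h]; exact hix
      · exact ih hndt x hyx j h

end aux

/-- let `V` be the real reflection representation spanned by an irreducible
root system with root basis `α₁, …, α_r` (a linearly independent spanning family, no two-block
orthogonal decomposition), with simple reflections `s i : x ↦ x - 2⟪αᵢ,x⟫/⟪αᵢ,αᵢ⟫ · αᵢ`,
and let `w = s₁ ⋯ s_r` be the corresponding Coxeter element.  Then `1` is not an eigenvalue
of `w` on `V`: the fixed subspace `V^w` is zero. -/
theorem stmt17 {V : Type*} [NormedAddCommGroup V] [InnerProductSpace ℝ V] {r : ℕ}
    (α : Fin r → V) (hne : ∀ i, α i ≠ 0) (hli : LinearIndependent ℝ α)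
    (hspan : Submodule.span ℝ (Set.range α) = ⊤)
    (hirr : ∀ P : Finset (Fin r),
      (∀ i ∈ P, ∀ j ∉ P, (inner ℝ (α i) (α j) : ℝ) = 0) → P = ∅ ∨ P = Finset.univ)
    (s : Fin r → Module.End ℝ V)
    (hs : ∀ (i : Fin r) (x : V),
      s i x = x - (2 * (inner ℝ (α i) x : ℝ) / (inner ℝ (α i) (α i) : ℝ)) • α i)
    (w : Module.End ℝ V) (hw : w = (List.ofFn s).prod) :
    ∀ v : V, w v = v → v = 0 := by
  intro v hv
  have hofn : List.ofFn s = (List.finRange r).map s := List.ofFn_eq_map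
  have hfix : ∀ i ∈ List.finRange r, (inner ℝ (α i) v : ℝ) = 0 := by
    apply aux_fix α s hs hne hli _ (List.nodup_finRange r)
    rw [← hofn, ← hw]; exact hv
  have hall : ∀ i, (inner ℝ (α i) v : ℝ) = 0 := fun i => hfix i (List.mem_finRange i)
  have key : ∀ u ∈ Submodule.span ℝ (Set.range α), (inner ℝ u v : ℝ) = 0 := by
    intro u hu
    induction hu using Submodule.span_induction with
    | mem u hu => obtain ⟨i, rfl⟩ := hu; exact hall i
    | zero => simp
    | add a b _ _ ha hb => rw [inner_add_left, ha, hb, add_zero]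
    | smul a u _ ih => rw [real_inner_smul_left, ih, mul_zero]
  have hv0 : (inner ℝ v v : ℝ) = 0 := key v (by rw [hspan]; trivial)
  exact inner_self_eq_zero.mp hv0
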